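/- Theorem 3.5: The open and closed semantics of LLNC validate exactly the same formulas: for every formula φ, φ is o-valid if and only if φ is c-valid. -/

import Mathlib

/-- Principal expressions over keys `K`, global names `G`, local names `N`. -/
inductive PExp (K G N : Type*) where
  | key : K → PExp K G N
  | glob : G → PExp K G N
  | loc : N → PExp K G N
  | s : PExp K G N → PExp K G N → PExp K G N

/-- Formulas of LLNC. -/
inductive Fml (K G N : Type*) where
  | bdto : PExp K G N → PExp K G N → Fml K G N
  | cert : K → Fml K G N → Fml K G N
  | not : Fml K G N → Fml K G N
  | and : Fml K G N → Fml K G N → Fml K G N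

/-- A world: an interpretation of global names and an assignment of
certificates to keys, with only finitely many certificates issued. -/
structure World (K G N : Type*) where
  beta : G → Set K
  certs : K → Set (Fml K G N)
  finite_certs : (⋃ k, certs k).Finite

variable {K G N : Type*}

/-- The interpretation of a principal expression relative to a world, a
local name assignment, and a key. -/
def interp (w : World K G N) (l : K → N → Set K) : PExp K G N → K → Set K
  | .key k', _ => {k'}
  | .glob g, _ => w.beta g
  | .loc n, k => l k n
  | .s p q, k => ⋃ k' ∈ interp w l p k, interp w l q k'

/-- Satisfaction of a formula at a world, local name assignment, and key. -/
def Sat (w : World K G N) (l : K → N → Set K) (k : K) : Fml K G N → Prop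
  | .bdto p q => interp w l q k ⊆ interp w l p k
  | .cert k' φ => φ ∈ w.certs k'
  | .not φ => ¬ Sat w l k φ
  | .and φ ψ => Sat w l k φ ∧ Sat w l k ψ

/-- A local name assignment is consistent with a world if every issued
binding certificate holds at the issuer. -/
def Consistent (w : World K G N) (l : K → N → Set K) : Prop :=
  ∀ (k : K) (n : N) (p : PExp K G N),
    Fml.bdto (.loc n) p ∈ w.certs k → Sat w l k (.bdto (.loc n) p)

/-- `lw` is the (unique) minimal local name assignment consistent with `w`. -/
def IsMinConsistent (w : World K G N) (lw : K → N → Set K) : Prop :=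
  Consistent w lw ∧ ∀ l, Consistent w l → ∀ (k : K) (n : N), lw k n ⊆ l k n

/-- Open-semantics satisfaction: satisfaction with a consistent assignment. -/
def OSat (w : World K G N) (l : K → N → Set K) (k : K) (φ : Fml K G N) : Prop :=
  Sat w l k φ ∧ Consistent w l

/-- `φ` is o-satisfiable. -/
def OSatisfiable (φ : Fml K G N) : Prop :=
  ∃ (w : World K G N) (l : K → N → Set K) (k : K), OSat w l k φ

/-- `φ` is o-valid: no triple satisfies `¬φ` under the open semantics. -/
def OValid (φ : Fml K G N) : Prop :=
  ¬ ∃ (w : World K G N) (l : K → N → Set K) (k : K), OSat w l k (.not φ)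

/-- `φ` is c-satisfiable: some world and key satisfy it under the minimal
consistent local name assignment of the world. -/
def CSatisfiable (φ : Fml K G N) : Prop :=
  ∃ (w : World K G N) (k : K) (lw : K → N → Set K), IsMinConsistent w lw ∧ Sat w lw k φ

/-- `φ` is c-valid: every world and key satisfy it under the minimal
consistent local name assignment of the world. -/
def CValid (φ : Fml K G N) : Prop :=
  ∀ (w : World K G N) (k : K) (lw : K → N → Set K), IsMinConsistent w lw → Sat w lw k φ

/-! ### Auxiliary machinery for the hard direction -/

namespace LLNCAux

/-- Atomic evaluation units: a principal expression flattens to a list of these. -/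
inductive U (K G N : Type*) where
  | uk : K → U K G N
  | ug : G → U K G N
  | un : N → U K G N

def flatten : PExp K G N → List (U K G N)
  | .key k => [.uk k]
  | .glob g => [.ug g]
  | .loc n => [.un n]
  | .s p q => flatten p ++ flatten q

def stepx (w : World K G N) (l : K → N → Set K) : U K G N → K → Set K
  | .uk k, _ => {k}
  | .ug g, _ => w.beta g
  | .un n, x => l x n

def run (w : World K G N) (l : K → N → Set K) : List (U K G N) → Set K → Set K
  | [], S => S
  | u :: us, S => run w l us (⋃ x ∈ S, stepx w l u x)

lemma run_append (w : World K G N) (l : K → N → Set K) (A B : List (U K G N)) (S : Set K) :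
    run w l (A ++ B) S = run w l B (run w l A S) := by
  induction A generalizing S with
  | nil => simp [run]
  | cons u us ih => simp [run, ih]

lemma run_linear (w : World K G N) (l : K → N → Set K) (us : List (U K G N)) (S : Set K) :
    run w l us S = ⋃ x ∈ S, run w l us {x} := by
  induction us generalizing S with
  | nil => simp only [run]; exact (Set.biUnion_of_singleton S).symm
  | cons u us ih =>
    simp only [run]
    rw [ih]
    have h2 : ∀ x : K, run w l us (⋃ y ∈ ({x} : Set K), stepx w l u y)
        = ⋃ y ∈ stepx w l u x, run w l us {y} := by
      intro x
      rw [ih]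
      simp
    ext z
    simp only [Set.mem_iUnion, h2, exists_prop]
    constructor
    · rintro ⟨y, ⟨x, hx, hyx⟩, hz⟩
      exact ⟨x, hx, y, hyx, hz⟩
    · rintro ⟨x, hx, y, hyx, hz⟩
      exact ⟨y, ⟨x, hx, hyx⟩, hz⟩

lemma interp_eq_run (w : World K G N) (l : K → N → Set K) (e : PExp K G N) (x : K) :
    interp w l e x = run w l (flatten e) {x} := by
  induction e generalizing x with
  | key k => simp [interp, flatten, run, stepx]
  | glob g => simp [interp, flatten, run, stepx]
  | loc n => simp [interp, flatten, run, stepx]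
  | s p q ihp ihq =>
    simp only [interp, flatten]
    rw [run_append, ← ihp, run_linear]
    exact Set.iUnion₂_congr fun y _ => ihq y

/-! ### syntactic collectors -/

def ekeys : PExp K G N → List K
  | .key k => [k]
  | .glob _ => []
  | .loc _ => []
  | .s p q => ekeys p ++ ekeys q

def enames : PExp K G N → List N
  | .key _ => []
  | .glob _ => []
  | .loc n => [n]
  | .s p q => enames p ++ enames q

def esize : PExp K G N → ℕ
  | .key _ => 1
  | .glob _ => 1
  | .loc _ => 1
  | .s p q => esize p + esize q + 1

def fexprs : Fml K G N → List (PExp K G N)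
  | .bdto p q => [p, q]
  | .cert _ ψ => fexprs ψ
  | .not ψ => fexprs ψ
  | .and ψ χ => fexprs ψ ++ fexprs χ

def certkeys : Fml K G N → List K
  | .bdto _ _ => []
  | .cert k ψ => k :: certkeys ψ
  | .not ψ => certkeys ψ
  | .and ψ χ => certkeys ψ ++ certkeys χ

def fsize : Fml K G N → ℕ
  | .bdto p q => esize p + esize q + 1
  | .cert _ ψ => fsize ψ + 1
  | .not ψ => fsize ψ + 1
  | .and ψ χ => fsize ψ + fsize χ + 1

def subfL : Fml K G N → List (Fml K G N)
  | .bdto p q => [.bdto p q]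
  | .cert k ψ => .cert k ψ :: subfL ψ
  | .not ψ => .not ψ :: subfL ψ
  | .and ψ χ => .and ψ χ :: (subfL ψ ++ subfL χ)

def fnames (φ : Fml K G N) : List N := (fexprs φ).flatMap enames

def keyL (φ : Fml K G N) : List K := (fexprs φ).flatMap ekeys ++ certkeys φ

def tower (k : K) : ℕ → PExp K G N
  | 0 => .key k
  | m + 1 => .s (.key k) (tower k m)

def traceF (φ₁ : Fml K G N) (n : N) (κ : K) : Fml K G N := .bdto (.loc n) (tower κ (fsize φ₁))

lemma interp_tower (w : World K G N) (l : K → N → Set K) (k : K) (m : ℕ) (x : K) :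
    interp w l (tower k m) x = {k} := by
  induction m generalizing x with
  | zero => simp [tower, interp]
  | succ m ih => simp [tower, interp, ih]

lemma esize_tower (k : K) (m : ℕ) : m + 1 ≤ esize (tower (G := G) (N := N) k m) := by
  induction m with
  | zero => simp [tower, esize]
  | succ m ih => simp only [tower, esize]; omega

lemma mem_subfL_self (φ : Fml K G N) : φ ∈ subfL φ := by
  cases φ <;> simp [subfL]

lemma subfL_trans {φ ψ χ : Fml K G N} (h1 : ψ ∈ subfL φ) (h2 : χ ∈ subfL ψ) : χ ∈ subfL φ := by
  induction φ with
  | bdto p q => simp only [subfL, List.mem_singleton] at h1; subst h1; exact h2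
  | cert k ξ ih =>
    simp only [subfL, List.mem_cons] at h1 ⊢
    rcases h1 with rfl | h1
    · simp only [subfL, List.mem_cons] at h2; exact h2
    · exact Or.inr (ih h1)
  | not ξ ih =>
    simp only [subfL, List.mem_cons] at h1 ⊢
    rcases h1 with rfl | h1
    · simp only [subfL, List.mem_cons] at h2; exact h2
    · exact Or.inr (ih h1)
  | and ξ₁ ξ₂ ih₁ ih₂ =>
    simp only [subfL, List.mem_cons, List.mem_append] at h1 ⊢
    rcases h1 with rfl | h1 | h1
    · simp only [subfL, List.mem_cons, List.mem_append] at h2; exact h2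
    · exact Or.inr (Or.inl (ih₁ h1))
    · exact Or.inr (Or.inr (ih₂ h1))

lemma fsize_mono {φ ψ : Fml K G N} (h : ψ ∈ subfL φ) : fsize ψ ≤ fsize φ := by
  induction φ with
  | bdto p q => simp only [subfL, List.mem_singleton] at h; subst h; omega
  | cert k ξ ih =>
    simp only [subfL, List.mem_cons] at h
    rcases h with rfl | h
    · omega
    · have := ih h; simp only [fsize]; omega
  | not ξ ih =>
    simp only [subfL, List.mem_cons] at h
    rcases h with rfl | h
    · omega
    · have := ih h; simp only [fsize]; omega
  | and ξ₁ ξ₂ ih₁ ih₂ =>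
    simp only [subfL, List.mem_cons, List.mem_append] at h
    rcases h with rfl | h | h
    · omega
    · have := ih₁ h; simp only [fsize]; omega
    · have := ih₂ h; simp only [fsize]; omega

lemma fexprs_sub {φ ψ : Fml K G N} (h : ψ ∈ subfL φ) : ∀ e ∈ fexprs ψ, e ∈ fexprs φ := by
  induction φ with
  | bdto p q => simp only [subfL, List.mem_singleton] at h; subst h; exact fun e he => he
  | cert k ξ ih =>
    simp only [subfL, List.mem_cons] at h
    rcases h with rfl | h
    · exact fun e he => he
    · exact fun e he => ih h e he
  | not ξ ih =>
    simp only [subfL, List.mem_cons] at h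
    rcases h with rfl | h
    · exact fun e he => he
    · exact fun e he => ih h e he
  | and ξ₁ ξ₂ ih₁ ih₂ =>
    simp only [subfL, List.mem_cons, List.mem_append] at h
    rcases h with rfl | h | h
    · exact fun e he => he
    · exact fun e he => by simp only [fexprs, List.mem_append]; exact Or.inl (ih₁ h e he)
    · exact fun e he => by simp only [fexprs, List.mem_append]; exact Or.inr (ih₂ h e he)

lemma certkeys_sub {φ ψ : Fml K G N} (h : ψ ∈ subfL φ) : ∀ k ∈ certkeys ψ, k ∈ certkeys φ := by
  induction φ with
  | bdto p q => simp only [subfL, List.mem_singleton] at h; subst h; exact fun e he => he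
  | cert k ξ ih =>
    simp only [subfL, List.mem_cons] at h
    rcases h with rfl | h
    · exact fun e he => he
    · exact fun e he => by simp only [certkeys, List.mem_cons]; exact Or.inr (ih h e he)
  | not ξ ih =>
    simp only [subfL, List.mem_cons] at h
    rcases h with rfl | h
    · exact fun e he => he
    · exact fun e he => ih h e he
  | and ξ₁ ξ₂ ih₁ ih₂ =>
    simp only [subfL, List.mem_cons, List.mem_append] at h
    rcases h with rfl | h | h
    · exact fun e he => he
    · exact fun e he => by simp only [certkeys, List.mem_append]; exact Or.inl (ih₁ h e he)
    · exact fun e he => by simp only [certkeys, List.mem_append]; exact Or.inr (ih₂ h e he)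

lemma un_mem_flatten {e : PExp K G N} {n : N} (h : U.un n ∈ flatten e) : n ∈ enames e := by
  induction e with
  | key k => simp [flatten] at h
  | glob g => simp [flatten] at h
  | loc m => simp only [flatten, List.mem_singleton] at h; cases h; simp [enames]
  | s p q ihp ihq =>
    simp only [flatten, List.mem_append] at h
    simp only [enames, List.mem_append]
    exact h.imp ihp ihq

/-! ### the quotient construction -/

variable (w : World K G N) (l : K → N → Set K) (φ₁ : Fml K G N) (k₀ : K)

def Dlist : List K := k₀ :: keyL φ₁

def PL : List (K → Prop) :=
  (Dlist φ₁ k₀).map (fun d => fun x => x = d) ++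
  (fexprs φ₁).flatMap (fun e => (Dlist φ₁ k₀).flatMap (fun k =>
    (List.range ((flatten e).length + 1)).map (fun j =>
      fun x => x ∈ run w l ((flatten e).take j) {k})))

def dz : K → (Fin (PL w l φ₁ k₀).length → Prop) :=
  fun κ i => (PL w l φ₁ k₀).get i κ

lemma dz_iff {x y : K} (hδ : dz w l φ₁ k₀ x = dz w l φ₁ k₀ y)
    {P : K → Prop} (hP : P ∈ PL w l φ₁ k₀) : P x ↔ P y := by
  obtain ⟨i, hi⟩ := List.get_of_mem hP
  have := congrFun hδ i
  simp only [dz, hi] at this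
  exact iff_of_eq this

variable [Nonempty K]

noncomputable def hmap : K → K :=
  fun κ => Classical.epsilon (fun y => dz w l φ₁ k₀ y = dz w l φ₁ k₀ κ)

lemma dz_hmap (κ : K) : dz w l φ₁ k₀ (hmap w l φ₁ k₀ κ) = dz w l φ₁ k₀ κ :=
  Classical.epsilon_spec (p := fun y => dz w l φ₁ k₀ y = dz w l φ₁ k₀ κ) ⟨κ, rfl⟩

lemma hmap_eq_of {x y : K} (h : dz w l φ₁ k₀ x = dz w l φ₁ k₀ y) :
    hmap w l φ₁ k₀ x = hmap w l φ₁ k₀ y := by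
  unfold hmap; rw [h]

lemma dz_of_hmap_eq {x y : K} (h : hmap w l φ₁ k₀ x = hmap w l φ₁ k₀ y) :
    dz w l φ₁ k₀ x = dz w l φ₁ k₀ y := by
  rw [← dz_hmap w l φ₁ k₀ x, h, dz_hmap]

lemma hmap_mem_D {k : K} (hk : k ∈ Dlist φ₁ k₀) : hmap w l φ₁ k₀ k = k := by
  have hP : (fun x => x = k) ∈ PL w l φ₁ k₀ :=
    List.mem_append_left _ (List.mem_map.mpr ⟨k, hk, rfl⟩)
  exact (dz_iff w l φ₁ k₀ (dz_hmap w l φ₁ k₀ k) hP).mpr rfl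

lemma range_hmap_finite : (Set.range (hmap w l φ₁ k₀)).Finite := by
  have h : hmap w l φ₁ k₀ =
      (fun c => Classical.epsilon (fun y => dz w l φ₁ k₀ y = c)) ∘ (dz w l φ₁ k₀) := rfl
  rw [h, Set.range_comp]
  exact (Set.Finite.subset Set.finite_univ (Set.subset_univ _)).image _

def lhat : K → N → Set K :=
  fun x n => {y | n ∈ fnames φ₁ ∧ ∃ κ, dz w l φ₁ k₀ κ = dz w l φ₁ k₀ x ∧ y ∈ l κ n}

noncomputable def lflat : K → N → Set K :=
  fun x n => hmap w l φ₁ k₀ '' lhat w l φ₁ k₀ x n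

noncomputable def W' : World K G N where
  beta := fun g => hmap w l φ₁ k₀ '' w.beta g
  certs := fun k => {F | (k ∈ Dlist φ₁ k₀ ∧ F ∈ w.certs k ∧ F ∈ subfL φ₁) ∨
    ∃ n κ, κ ∈ lflat w l φ₁ k₀ k n ∧ F = traceF φ₁ n κ}
  finite_certs := by
    apply Set.Finite.subset (Set.Finite.union w.finite_certs
      ((Set.Finite.prod ((fnames φ₁).finite_toSet) (range_hmap_finite w l φ₁ k₀)).image
        (fun p => traceF φ₁ p.1 p.2)))
    intro F hF
    simp only [Set.mem_iUnion, Set.mem_setOf_eq] at hF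
    obtain ⟨k, hk⟩ := hF
    rcases hk with ⟨-, hc, -⟩ | ⟨n, κ, hκ, rfl⟩
    · exact Or.inl (Set.mem_iUnion.mpr ⟨k, hc⟩)
    · refine Or.inr ⟨(n, κ), ⟨?_, ?_⟩, rfl⟩
      · obtain ⟨y, ⟨hn, -⟩, -⟩ := hκ
        exact hn
      · obtain ⟨y, -, hy⟩ := hκ
        exact ⟨y, hy⟩

/-- run faithfulness -/
lemma run_faithful {e : PExp K G N} (he : e ∈ fexprs φ₁) {k : K} (hk : k ∈ Dlist φ₁ k₀) :
    ∀ A : List (U K G N), (∃ B, flatten e = A ++ B) →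
      run w (lhat w l φ₁ k₀) A {k} = run w l A {k} := by
  intro A
  induction A using List.reverseRecOn with
  | nil => intro _; rfl
  | append_singleton A' u ih =>
    rintro ⟨B, hAB⟩
    have hpre : ∃ B', flatten e = A' ++ B' := ⟨u :: B, by simpa using hAB⟩
    rw [run_append, run_append, ih hpre]
    set X : Set K := run w l A' {k} with hX
    -- the prefix set X is tracked
    have hXP : (fun x => x ∈ run w l ((flatten e).take A'.length) {k}) ∈ PL w l φ₁ k₀ := by
      refine List.mem_append_right _ ?_
      refine List.mem_flatMap.mpr ⟨e, he, ?_⟩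
      refine List.mem_flatMap.mpr ⟨k, hk, ?_⟩
      refine List.mem_map.mpr ⟨A'.length, ?_, rfl⟩
      refine List.mem_range.mpr ?_
      have : A'.length ≤ (flatten e).length := by
        rw [hAB]; simp
      omega
    have htake : (flatten e).take A'.length = A' := by
      rw [hAB, List.append_assoc]
      exact List.take_left
    have htracked : ∀ x y : K, dz w l φ₁ k₀ x = dz w l φ₁ k₀ y → (x ∈ X ↔ y ∈ X) := by
      intro x y hxy
      have := dz_iff w l φ₁ k₀ hxy hXP
      rwa [htake] at this
    -- single step
    show run w (lhat w l φ₁ k₀) [u] X = run w l [u] X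
    have hrun1 : ∀ (l' : K → N → Set K), run w l' [u] X = ⋃ x ∈ X, stepx w l' u x := by
      intro l'; rfl
    rw [hrun1, hrun1]
    cases u with
    | uk k' => rfl
    | ug g => rfl
    | un n =>
      have hn : n ∈ fnames φ₁ := by
        have hu : U.un n ∈ flatten e := by
          rw [hAB]; simp
        exact List.mem_flatMap.mpr ⟨e, he, un_mem_flatten hu⟩
      simp only [stepx]
      ext z
      simp only [Set.mem_iUnion, exists_prop]
      constructor
      · rintro ⟨x, hx, hz⟩
        obtain ⟨-, κ, hδ, hzκ⟩ := hz
        exact ⟨κ, (htracked κ x hδ).mpr hx, hzκ⟩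
      · rintro ⟨x, hx, hz⟩
        exact ⟨x, hx, hn, x, rfl, hz⟩

lemma interp_hat {e : PExp K G N} (he : e ∈ fexprs φ₁) {k : K} (hk : k ∈ Dlist φ₁ k₀) :
    interp w (lhat w l φ₁ k₀) e k = interp w l e k := by
  rw [interp_eq_run, interp_eq_run]
  exact run_faithful w l φ₁ k₀ he hk (flatten e) ⟨[], by simp⟩

/-- homomorphism -/
lemma lhat_class {x y : K} (h : dz w l φ₁ k₀ x = dz w l φ₁ k₀ y) (n : N) :
    lhat w l φ₁ k₀ x n = lhat w l φ₁ k₀ y n := by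
  unfold lhat
  ext z
  simp only [Set.mem_setOf_eq, h]

lemma interp_hom (e : PExp K G N) (hke : ∀ k' ∈ ekeys e, hmap w l φ₁ k₀ k' = k') (x : K) :
    interp (W' w l φ₁ k₀) (lflat w l φ₁ k₀) e (hmap w l φ₁ k₀ x) =
      hmap w l φ₁ k₀ '' interp w (lhat w l φ₁ k₀) e x := by
  induction e generalizing x with
  | key k' =>
    have hk' : hmap w l φ₁ k₀ k' = k' := hke k' (by simp [ekeys])
    simp only [interp]
    rw [Set.image_singleton, hk']
  | glob g => rfl
  | loc n =>
    simp only [interp]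
    show lflat w l φ₁ k₀ (hmap w l φ₁ k₀ x) n = _
    unfold lflat
    rw [lhat_class w l φ₁ k₀ (dz_hmap w l φ₁ k₀ x) n]
  | s p q ihp ihq =>
    have hkp : ∀ k' ∈ ekeys p, hmap w l φ₁ k₀ k' = k' := fun k' h =>
      hke k' (by simp only [ekeys, List.mem_append]; exact Or.inl h)
    have hkq : ∀ k' ∈ ekeys q, hmap w l φ₁ k₀ k' = k' := fun k' h =>
      hke k' (by simp only [ekeys, List.mem_append]; exact Or.inr h)
    simp only [interp]
    rw [ihp hkp, Set.biUnion_image]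
    rw [show (⋃ y ∈ interp w (lhat w l φ₁ k₀) p x,
          interp (W' w l φ₁ k₀) (lflat w l φ₁ k₀) q (hmap w l φ₁ k₀ y))
        = ⋃ y ∈ interp w (lhat w l φ₁ k₀) p x,
          hmap w l φ₁ k₀ '' interp w (lhat w l φ₁ k₀) q y from
      Set.iUnion₂_congr fun y _ => ihq hkq y]
    exact (Set.image_iUnion₂ _ _).symm

lemma interp_flat {e : PExp K G N} (he : e ∈ fexprs φ₁) {k : K} (hk : k ∈ Dlist φ₁ k₀) :
    interp (W' w l φ₁ k₀) (lflat w l φ₁ k₀) e k = hmap w l φ₁ k₀ '' interp w l e k := by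
  conv_lhs => rw [← hmap_mem_D w l φ₁ k₀ hk]
  rw [interp_hom, interp_hat w l φ₁ k₀ he hk]
  intro k' hk'
  exact hmap_mem_D w l φ₁ k₀ (by
    simp only [Dlist, keyL, List.mem_cons, List.mem_append, List.mem_flatMap]
    exact Or.inr (Or.inl ⟨e, he, hk'⟩))

lemma atom_iff {p q : PExp K G N} (hp : p ∈ fexprs φ₁) (hq : q ∈ fexprs φ₁)
    {k : K} (hk : k ∈ Dlist φ₁ k₀) :
    (interp (W' w l φ₁ k₀) (lflat w l φ₁ k₀) q k ⊆ interp (W' w l φ₁ k₀) (lflat w l φ₁ k₀) p k)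
      ↔ (interp w l q k ⊆ interp w l p k) := by
  rw [interp_flat w l φ₁ k₀ hp hk, interp_flat w l φ₁ k₀ hq hk]
  constructor
  · intro hsub x hx
    obtain ⟨x', hx', hxx⟩ := hsub (Set.mem_image_of_mem _ hx)
    have hdz : dz w l φ₁ k₀ x' = dz w l φ₁ k₀ x := dz_of_hmap_eq w l φ₁ k₀ hxx
    have hP : (fun z => z ∈ run w l ((flatten p).take (flatten p).length) {k}) ∈ PL w l φ₁ k₀ := by
      refine List.mem_append_right _ ?_
      refine List.mem_flatMap.mpr ⟨p, hp, ?_⟩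
      refine List.mem_flatMap.mpr ⟨k, hk, ?_⟩
      exact List.mem_map.mpr ⟨(flatten p).length, List.mem_range.mpr (by omega), rfl⟩
    have hiff := dz_iff w l φ₁ k₀ hdz hP
    rw [List.take_length] at hiff
    rw [interp_eq_run]
    exact hiff.mp (by rw [← interp_eq_run]; exact hx')
  · exact fun hsub => Set.image_mono hsub

lemma cert_iff {k' : K} {χ : Fml K G N} (hm : Fml.cert k' χ ∈ subfL φ₁) :
    (χ ∈ (W' w l φ₁ k₀).certs k') ↔ χ ∈ w.certs k' := by
  have hχ : χ ∈ subfL φ₁ :=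
    subfL_trans hm (by simp only [subfL]; exact List.mem_cons_of_mem _ (mem_subfL_self χ))
  constructor
  · rintro (⟨-, hc, -⟩ | ⟨n, κ, -, rfl⟩)
    · exact hc
    · exfalso
      have h1 : fsize (traceF φ₁ n κ) ≤ fsize φ₁ := fsize_mono hχ
      have h2 : fsize φ₁ + 1 ≤ esize (tower (G := G) (N := N) κ (fsize φ₁)) := esize_tower κ _
      simp only [traceF, fsize, esize] at h1
      omega
  · intro hc
    have hk' : k' ∈ Dlist φ₁ k₀ := by
      have : k' ∈ certkeys φ₁ := certkeys_sub hm k' (by simp [certkeys])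
      simp only [Dlist, keyL, List.mem_cons, List.mem_append]
      exact Or.inr (Or.inr this)
    exact Or.inl ⟨hk', hc, hχ⟩

lemma sat_transfer : ∀ ψ : Fml K G N, ψ ∈ subfL φ₁ →
    (Sat (W' w l φ₁ k₀) (lflat w l φ₁ k₀) k₀ ψ ↔ Sat w l k₀ ψ) := by
  intro ψ
  induction ψ with
  | bdto p q =>
    intro hm
    have hp : p ∈ fexprs φ₁ := fexprs_sub hm p (by simp [fexprs])
    have hq : q ∈ fexprs φ₁ := fexprs_sub hm q (by simp [fexprs])
    simp only [Sat]
    exact atom_iff w l φ₁ k₀ hp hq (by simp [Dlist])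
  | cert k' χ ih =>
    intro hm
    simp only [Sat]
    exact cert_iff w l φ₁ k₀ hm
  | not χ ih =>
    intro hm
    have hχ : χ ∈ subfL φ₁ :=
      subfL_trans hm (by simp only [subfL]; exact List.mem_cons_of_mem _ (mem_subfL_self χ))
    simp only [Sat]
    exact not_congr (ih hχ)
  | and χ₁ χ₂ ih₁ ih₂ =>
    intro hm
    have h₁ : χ₁ ∈ subfL φ₁ := subfL_trans hm (by
      simp only [subfL, List.mem_cons, List.mem_append]
      exact Or.inr (Or.inl (mem_subfL_self χ₁)))
    have h₂ : χ₂ ∈ subfL φ₁ := subfL_trans hm (by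
      simp only [subfL, List.mem_cons, List.mem_append]
      exact Or.inr (Or.inr (mem_subfL_self χ₂)))
    simp only [Sat]
    exact and_congr (ih₁ h₁) (ih₂ h₂)

lemma W'_consistent (hcons : Consistent w l) :
    Consistent (W' w l φ₁ k₀) (lflat w l φ₁ k₀) := by
  intro k n p hmem
  rcases hmem with ⟨hk, hc, hsub⟩ | ⟨n', κ, hκ, heq⟩
  · -- inherited certificate
    have hp : p ∈ fexprs φ₁ := fexprs_sub hsub p (by simp [fexprs])
    have hn : n ∈ fnames φ₁ := by
      refine List.mem_flatMap.mpr ⟨PExp.loc n, fexprs_sub hsub _ (by simp [fexprs]), ?_⟩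
      simp [enames]
    have horig : interp w l p k ⊆ l k n := hcons k n p hc
    show interp (W' w l φ₁ k₀) (lflat w l φ₁ k₀) p k ⊆
      interp (W' w l φ₁ k₀) (lflat w l φ₁ k₀) (.loc n) k
    simp only [interp]
    rw [interp_flat w l φ₁ k₀ hp hk]
    show _ ⊆ lflat w l φ₁ k₀ k n
    unfold lflat
    apply Set.image_mono
    intro z hz
    exact ⟨hn, k, rfl, horig hz⟩
  · -- trace certificate
    have : n = n' ∧ p = tower κ (fsize φ₁) := by
      unfold traceF at heq
      cases heq
      exact ⟨rfl, rfl⟩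
    obtain ⟨rfl, rfl⟩ := this
    show interp (W' w l φ₁ k₀) (lflat w l φ₁ k₀) (tower κ (fsize φ₁)) k ⊆
      interp (W' w l φ₁ k₀) (lflat w l φ₁ k₀) (.loc n) k
    rw [interp_tower]
    simp only [interp]
    exact Set.singleton_subset_iff.mpr hκ

lemma W'_minimal : ∀ l'', Consistent (W' w l φ₁ k₀) l'' →
    ∀ (k : K) (n : N), lflat w l φ₁ k₀ k n ⊆ l'' k n := by
  intro l'' hcons k n κ hκ
  have hcert : Fml.bdto (.loc n) (tower κ (fsize φ₁)) ∈ (W' w l φ₁ k₀).certs k :=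
    Or.inr ⟨n, κ, hκ, rfl⟩
  have := hcons k n (tower κ (fsize φ₁)) hcert
  simp only [Sat, interp] at this
  rw [interp_tower] at this
  exact this rfl

end LLNCAux

/-- Theorem 3.5: the open and closed semantics validate exactly
the same formulas. -/
theorem oValid_iff_cValid [Nonempty K] (φ : Fml K G N) : OValid φ ↔ CValid φ := by
  constructor
  · -- o-valid → c-valid
    intro hO w k lw hmin
    by_contra hnot
    exact hO ⟨w, lw, k, hnot, hmin.1⟩
  · -- c-valid → o-valid
    intro hC
    rintro ⟨w, l, k, hsat, hcons⟩
    -- `hsat : Sat w l k (.not φ)`, i.e. `¬ Sat w l k φ`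
    have hsat' : ¬ Sat w l k φ := hsat
    set φ₁ : Fml K G N := Fml.not φ with hφ₁
    have hφmem : φ ∈ LLNCAux.subfL φ₁ := by
      simp only [hφ₁, LLNCAux.subfL]
      exact List.mem_cons_of_mem _ (LLNCAux.mem_subfL_self φ)
    have hmin : IsMinConsistent (LLNCAux.W' w l φ₁ k) (LLNCAux.lflat w l φ₁ k) :=
      ⟨LLNCAux.W'_consistent w l φ₁ k hcons, LLNCAux.W'_minimal w l φ₁ k⟩
    have h2 : Sat (LLNCAux.W' w l φ₁ k) (LLNCAux.lflat w l φ₁ k) k φ :=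
      hC _ k _ hmin
    exact hsat' ((LLNCAux.sat_transfer w l φ₁ k φ hφmem).mp h2)
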